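/- Let X be a linear space of gambles on Ω containing the constants, P a coherent lower prevision on X (satisfying superadditivity, nonnegative homogeneity, and P(X) - P(Y) ≤ sup(X-Y)), and Z an arbitrary gamble. Then the natural extension of P at Z equals sup{P(Y) : Y ∈ X, Y ≤ Z}. -/

import Mathlib

/-- for a coherent lower prevision on a linear space of gambles containing
constants, the natural extension at any gamble `Z` is `sup{P Y : Y ∈ X, Y ≤ Z}`. -/
theorem naturalExtension_eq_sup_dominated
    {Ω : Type*} [Nonempty Ω] (V : Submodule ℝ (Ω → ℝ))
    (hconst : ∀ c : ℝ, (fun _ : Ω => c) ∈ V)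
    (hbdd : ∀ X ∈ V, BddAbove (Set.range X) ∧ BddBelow (Set.range X))
    (P : (Ω → ℝ) → ℝ)
    (hA1 : ∀ X ∈ V, ∀ Y ∈ V, P X - P Y ≤ ⨆ ω, (X ω - Y ω))
    (hA2 : ∀ X ∈ V, ∀ t : ℝ, 0 ≤ t → P (fun ω => t * X ω) = t * P X)
    (hA3 : ∀ X ∈ V, ∀ Y ∈ V, P X + P Y ≤ P (fun ω => X ω + Y ω))
    (Z : Ω → ℝ) (hZa : BddAbove (Set.range Z)) (hZb : BddBelow (Set.range Z)) :
    sSup {α : ℝ | ∃ (m : ℕ) (X : Fin m → (Ω → ℝ)) (s : Fin m → ℝ),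
        (∀ i, X i ∈ V) ∧ (∀ i, 0 ≤ s i) ∧
        (⨆ ω, (∑ i, s i * (X i ω - P (X i)) - (Z ω - α))) < 0}
      = sSup {r : ℝ | ∃ Y ∈ V, (∀ ω, Y ω ≤ Z ω) ∧ r = P Y} := by
  set A : Set ℝ := {α : ℝ | ∃ (m : ℕ) (X : Fin m → (Ω → ℝ)) (s : Fin m → ℝ),
        (∀ i, X i ∈ V) ∧ (∀ i, 0 ≤ s i) ∧
        (⨆ ω, (∑ i, s i * (X i ω - P (X i)) - (Z ω - α))) < 0} with hAdef
  set B : Set ℝ := {r : ℝ | ∃ Y ∈ V, (∀ ω, Y ω ≤ Z ω) ∧ r = P Y} with hBdef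
  -- P 0 = 0
  have h0 : P (fun _ : Ω => (0:ℝ)) = 0 := by
    have := hA2 (fun _ : Ω => (0:ℝ)) (hconst 0) 0 le_rfl
    simpa using this
  -- constant shift
  have hshift : ∀ X ∈ V, ∀ c : ℝ, P (fun ω => X ω + c) = P X + c := by
    intro X hX c
    have hXc : (fun ω => X ω + c) ∈ V := V.add_mem hX (hconst c)
    have h1 := hA1 (fun ω => X ω + c) hXc X hX
    have h2 := hA1 X hX (fun ω => X ω + c) hXc
    simp only [add_sub_cancel_left] at h1
    have h1' : P (fun ω => X ω + c) - P X ≤ c := by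
      simpa [ciSup_const] using h1
    have h2' : P X - P (fun ω => X ω + c) ≤ -c := by
      have : ∀ ω : Ω, X ω - (X ω + c) = -c := by intro ω; ring
      simp only [this, ciSup_const] at h2
      exact h2
    linarith
  -- P X ≤ sup X
  have hle_sup : ∀ X ∈ V, P X ≤ ⨆ ω, X ω := by
    intro X hX
    have := hA1 X hX (fun _ : Ω => (0:ℝ)) (hconst 0)
    simpa [h0] using this
  -- P of constants
  have hPconst : ∀ c : ℝ, P (fun _ : Ω => c) = c := by
    intro c
    have := hshift (fun _ : Ω => (0:ℝ)) V.zero_mem c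
    simpa [h0] using this
  -- nonnegative combinations
  have hcomb : ∀ (m : ℕ) (X : Fin m → (Ω → ℝ)) (s : Fin m → ℝ),
      (∀ i, X i ∈ V) → (∀ i, 0 ≤ s i) →
      (fun ω => ∑ i, s i * X i ω) ∈ V ∧
      ∑ i, s i * P (X i) ≤ P (fun ω => ∑ i, s i * X i ω) := by
    intro m
    induction m with
    | zero =>
      intro X s _ _
      constructor
      · have hz : (fun ω => ∑ i : Fin 0, s i * X i ω) = (0 : Ω → ℝ) := by
          funext ω; simp
        rw [hz]; exact V.zero_mem
      · simp [h0]
    | succ n ih =>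
      intro X s hXV hs
      obtain ⟨ihV, ihP⟩ := ih (fun i => X i.succ) (fun i => s i.succ)
        (fun i => hXV i.succ) (fun i => hs i.succ)
      have hhead : (fun ω => s 0 * X 0 ω) ∈ V := by
        have := V.smul_mem (s 0) (hXV 0)
        simpa [Pi.smul_def, smul_eq_mul] using this
      have hmem : (fun ω => ∑ i : Fin (n+1), s i * X i ω) ∈ V := by
        have := V.add_mem hhead ihV
        have heq : (fun ω => ∑ i : Fin (n+1), s i * X i ω)
            = (fun ω => s 0 * X 0 ω + ∑ i : Fin n, s i.succ * X i.succ ω) := by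
          funext ω
          rw [Fin.sum_univ_succ]
        rw [heq]
        exact this
      refine ⟨hmem, ?_⟩
      have hPhead : s 0 * P (X 0) = P (fun ω => s 0 * X 0 ω) :=
        (hA2 (X 0) (hXV 0) (s 0) (hs 0)).symm
      have hsum := hA3 (fun ω => s 0 * X 0 ω) hhead
        (fun ω => ∑ i : Fin n, s i.succ * X i.succ ω) ihV
      calc ∑ i : Fin (n+1), s i * P (X i)
          = s 0 * P (X 0) + ∑ i : Fin n, s i.succ * P (X i.succ) := by
            rw [Fin.sum_univ_succ]
        _ ≤ P (fun ω => s 0 * X 0 ω) + P (fun ω => ∑ i : Fin n, s i.succ * X i.succ ω) := by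
            rw [← hPhead]; exact add_le_add le_rfl ihP
        _ ≤ P (fun ω => s 0 * X 0 ω + ∑ i : Fin n, s i.succ * X i.succ ω) := hsum
        _ = P (fun ω => ∑ i : Fin (n+1), s i * X i ω) := by
            congr 1
            funext ω
            rw [Fin.sum_univ_succ]
  -- membership in A from dominated elements of V
  have hmem_A : ∀ Y ∈ V, (∀ ω, Y ω ≤ Z ω) → ∀ ε : ℝ, 0 < ε → (P Y - ε) ∈ A := by
    intro Y hYV hYZ ε hε
    refine ⟨1, fun _ => Y, fun _ => 1, fun _ => hYV, fun _ => zero_le_one, ?_⟩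
    have hle : ∀ ω : Ω,
        (∑ i : Fin 1, (1:ℝ) * (Y ω - P Y) - (Z ω - (P Y - ε))) ≤ -ε := by
      intro ω
      have := hYZ ω
      simp only [Fin.sum_univ_one, one_mul]
      linarith
    exact lt_of_le_of_lt (ciSup_le hle) (by linarith)
  -- key: every element of A is dominated by some P Y
  have key : ∀ α ∈ A, ∃ Y ∈ V, (∀ ω, Y ω ≤ Z ω) ∧ α ≤ P Y := by
    intro α hα
    obtain ⟨m, X, s, hXV, hs, hsup⟩ := hα
    obtain ⟨hGV, hGP⟩ := hcomb m X s hXV hs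
    set c : ℝ := ∑ i, s i * P (X i) with hc
    have hpt : ∀ ω : Ω, (∑ i, s i * (X i ω - P (X i)) - (Z ω - α)) < 0 := by
      by_cases hb : BddAbove (Set.range fun ω => (∑ i, s i * (X i ω - P (X i)) - (Z ω - α)))
      · intro ω
        exact lt_of_le_of_lt (le_ciSup hb ω) hsup
      · rw [Real.iSup_of_not_bddAbove hb] at hsup
        exact absurd hsup (lt_irrefl 0)
    have hsplit : ∀ ω : Ω, ∑ i, s i * (X i ω - P (X i)) = (∑ i, s i * X i ω) - c := by
      intro ω
      simp [mul_sub, Finset.sum_sub_distrib, hc]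
    refine ⟨(fun ω => (∑ i, s i * X i ω) + (α - c)), V.add_mem hGV (hconst (α - c)), ?_, ?_⟩
    · intro ω
      have := hpt ω
      rw [hsplit ω] at this
      show (∑ i, s i * X i ω) + (α - c) ≤ Z ω
      linarith
    · rw [hshift _ hGV]
      linarith
  -- nonemptiness and bounds
  have hY0V : (fun _ : Ω => sInf (Set.range Z)) ∈ V := hconst _
  have hY0Z : ∀ ω, (fun _ : Ω => sInf (Set.range Z)) ω ≤ Z ω :=
    fun ω => csInf_le hZb ⟨ω, rfl⟩
  have hBne : B.Nonempty := ⟨P (fun _ : Ω => sInf (Set.range Z)), _, hY0V, hY0Z, rfl⟩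
  have hBbdd : BddAbove B := by
    refine ⟨sSup (Set.range Z), ?_⟩
    rintro r ⟨Y, hYV, hYZ, rfl⟩
    exact (hle_sup Y hYV).trans (ciSup_le fun ω => (hYZ ω).trans (le_csSup hZa ⟨ω, rfl⟩))
  have hAne : A.Nonempty :=
    ⟨P (fun _ : Ω => sInf (Set.range Z)) - 1, hmem_A _ hY0V hY0Z 1 one_pos⟩
  have hAleB : ∀ α ∈ A, α ≤ sSup B := by
    intro α hα
    obtain ⟨Y, hYV, hYZ, hαY⟩ := key α hα
    exact hαY.trans (le_csSup hBbdd ⟨Y, hYV, hYZ, rfl⟩)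
  have hAbdd : BddAbove A := ⟨sSup B, hAleB⟩
  apply le_antisymm
  · exact csSup_le hAne hAleB
  · refine csSup_le hBne ?_
    rintro r ⟨Y, hYV, hYZ, rfl⟩
    refine le_of_forall_pos_le_add ?_
    intro ε hε
    have := le_csSup hAbdd (hmem_A Y hYV hYZ ε hε)
    linarith
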